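/- Let F be a subfunctor of the identity functor on the category of abelian groups such that F(A) is torsion-free for every abelian group A, or such that Q(A) = A/F(A) is divisible for every A with Q non-trivial. In the first case F is trivial: F(A) = 0 for all abelian groups A. -/

import Mathlib

open CategoryTheory

universe u

/-- Old Mathlib's `AddMonoid.IsTorsionFree` (removed): every nonzero element has infinite order. -/
def AddMonoid.IsTorsionFree (G : Type*) [AddMonoid G] : Prop :=
  ∀ g : G, g ≠ 0 → ¬IsOfFinAddOrder g

/-- A subfunctor of the identity functor on the category of abelian groups. -/
structure AbIdSubfunctor : Type (u + 1) where
  sub : ∀ A : AddCommGrpCat.{u}, AddSubgroup A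
  map_le : ∀ {A B : AddCommGrpCat.{u}} (φ : A ⟶ B), (sub A).map φ.hom ≤ sub B

theorem stmt_19 (F : AbIdSubfunctor.{u})
    (htf : ∀ A : AddCommGrpCat.{u}, AddMonoid.IsTorsionFree (F.sub A)) :
    ∀ A : AddCommGrpCat.{u}, F.sub A = ⊥ := by
  intro A
  ext a
  simp only [AddSubgroup.mem_bot]
  constructor
  · intro ha
    by_contra hne
    set B := AddSubgroup.zmultiples ((2:ℤ) • a) with hB
    let Q : AddCommGrpCat.{u} := AddCommGrpCat.of (A ⧸ B)
    let π : A ⟶ Q := AddCommGrpCat.ofHom (QuotientAddGroup.mk' B)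
    have hmem : π a ∈ F.sub Q := F.map_le π ⟨a, ha, rfl⟩
    have h2 : (2:ℤ) • (⟨π a, hmem⟩ : F.sub Q) = 0 := by
      ext
      show (2:ℤ) • (π a) = 0
      rw [← map_zsmul]
      exact (QuotientAddGroup.eq_zero_iff _).mpr (AddSubgroup.mem_zmultiples _)
    have hfin : IsOfFinAddOrder (⟨π a, hmem⟩ : F.sub Q) :=
      isOfFinAddOrder_iff_zsmul_eq_zero.mpr ⟨2, by norm_num, h2⟩
    have hzero : (⟨π a, hmem⟩ : F.sub Q) = 0 := by
      by_contra h
      exact htf Q _ h hfin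
    have hπa : π a = 0 := congrArg Subtype.val hzero
    have haB : a ∈ B := (QuotientAddGroup.eq_zero_iff _).mp hπa
    obtain ⟨k, hk⟩ := haB
    have hk2 : k • ((2:ℤ) • a) = a := hk
    have hk' : (2 * k - 1) • a = 0 := by
      rw [sub_smul, mul_comm, mul_smul, one_smul, hk2, sub_self]
    have hfa : IsOfFinAddOrder (⟨a, ha⟩ : F.sub A) := by
      refine isOfFinAddOrder_iff_zsmul_eq_zero.mpr ⟨2 * k - 1, by omega, ?_⟩
      ext
      exact hk'
    have : (⟨a, ha⟩ : F.sub A) = 0 := by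
      by_contra h
      exact htf A _ h hfa
    exact hne (congrArg Subtype.val this)
  · rintro rfl
    exact (F.sub A).zero_mem
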